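/- arXiv:1705.02736 — 2 statements merged into one kernel-verified Lean document; each statement's English description precedes it below -/
import Mathlib

section
/- Let $d \ge 3$ and let $V : \{(x,y) \in \mathbb{R}^d_+ \times \mathbb{R}^d_+ : x \ne y\} \to [0,\infty)$ satisfy: (i) $V(x,y) \le K \min\{d_x, |x-y|\}^{\alpha} |x-y|^{2-d-\alpha}$ for all $0 < |x-y| < R_2$, and (ii) $V(x,y) = V^*(y,x)$ where $V^*$ also satisfies estimate (i) with the same constants. Suppose moreover there is a constant $K'$ such that whenever $4 d_y < |x-y|/4 =: R < R_2/8$, $V(x,y) \le K' (d_y)^\alpha R^{-d/2-\alpha} \big( \int_{\Omega_{2R}(y)} V^*(z,x)^2 dz \big)^{1/2}$. Then there is $C = C(d, K, K', \alpha)$ such that for all $x, y$ with $0 < |x-y| < R_2/2$, $V(x,y) \le C \min\{d_x, |x-y|\}^{\alpha} \min\{d_y, |x-y|\}^{\alpha} |x-y|^{2-d-2\alpha}$. -/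
open MeasureTheory Metric Set

/-- two-sided boundary decay of the Green function on the half space
(Step 2 of Theorem MRG), from the one-sided estimate, the duality relation
`V(x,y) = V^*(y,x)`, and the boundary Hölder estimate in the `y`-variable. -/
theorem stmt_9 (d : ℕ) (hd : 3 ≤ d) (K K' α R₂ : ℝ)
    (hK : 0 < K) (hK' : 0 < K') (hα : α ∈ Ioo (0 : ℝ) 1) (hR₂ : 0 < R₂)
    (V Vs : EuclideanSpace ℝ (Fin d) → EuclideanSpace ℝ (Fin d) → ℝ)
    (hVpos : ∀ x y, 0 ≤ V x y) (hVspos : ∀ x y, 0 ≤ Vs x y)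
    -- (i) one-sided decay for `V`
    (hi : ∀ x y : EuclideanSpace ℝ (Fin d),
      0 < x (⟨0, by omega⟩ : Fin d) → 0 < y (⟨0, by omega⟩ : Fin d) →
      0 < dist x y → dist x y < R₂ →
      V x y ≤ K * min (x (⟨0, by omega⟩ : Fin d)) (dist x y) ^ α *
        dist x y ^ (2 - (d : ℝ) - α))
    -- (ii) duality and one-sided decay for `V^*`
    (hsym : ∀ x y : EuclideanSpace ℝ (Fin d),
      0 < x (⟨0, by omega⟩ : Fin d) → 0 < y (⟨0, by omega⟩ : Fin d) → x ≠ y →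
      V x y = Vs y x)
    (hi' : ∀ x y : EuclideanSpace ℝ (Fin d),
      0 < x (⟨0, by omega⟩ : Fin d) → 0 < y (⟨0, by omega⟩ : Fin d) →
      0 < dist x y → dist x y < R₂ →
      Vs x y ≤ K * min (x (⟨0, by omega⟩ : Fin d)) (dist x y) ^ α *
        dist x y ^ (2 - (d : ℝ) - α))
    -- boundary Hölder estimate in the `y`-variable
    (hint : ∀ x y : EuclideanSpace ℝ (Fin d),
      0 < x (⟨0, by omega⟩ : Fin d) → 0 < y (⟨0, by omega⟩ : Fin d) →
      ∀ R : ℝ, R = dist x y / 4 → 4 * y (⟨0, by omega⟩ : Fin d) < R → R < R₂ / 8 →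
      V x y ≤ K' * y (⟨0, by omega⟩ : Fin d) ^ α * R ^ (-(d : ℝ) / 2 - α) *
        (∫ z in {w : EuclideanSpace ℝ (Fin d) | 0 < w (⟨0, by omega⟩ : Fin d)} ∩ ball y (2 * R),
          (Vs z x) ^ 2) ^ ((1 : ℝ) / 2)) :
    ∃ C : ℝ, 0 < C ∧
      ∀ x y : EuclideanSpace ℝ (Fin d),
        0 < x (⟨0, by omega⟩ : Fin d) → 0 < y (⟨0, by omega⟩ : Fin d) →
        0 < dist x y → dist x y < R₂ / 2 →
        V x y ≤ C * min (x (⟨0, by omega⟩ : Fin d)) (dist x y) ^ α *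
          min (y (⟨0, by omega⟩ : Fin d)) (dist x y) ^ α *
          dist x y ^ (2 - (d : ℝ) - 2 * α) := by
  obtain ⟨hα0, hα1⟩ := hα
  have hdR : (3 : ℝ) ≤ (d : ℝ) := by exact_mod_cast hd
  set c : ℝ := (volume (ball (0 : EuclideanSpace ℝ (Fin d)) 1)).toReal with hcdef
  have hc0 : 0 ≤ c := ENNReal.toReal_nonneg
  set e : ℝ := -(d : ℝ) / 2 - α with hedef
  set CB : ℝ := K' * (K * (3 / 2 : ℝ) ^ α) * c ^ ((1 : ℝ) / 2) *
      (((4 : ℝ) ^ e)⁻¹ * (((2 : ℝ) ^ (2 - (d : ℝ) - α))⁻¹ * ((2 : ℝ) ^ ((d : ℝ) / 2))⁻¹)) with hCBdef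
  have hCB0 : 0 ≤ CB := by
    apply mul_nonneg
    apply mul_nonneg
    · positivity
    · exact Real.rpow_nonneg hc0 _
    · positivity
  refine ⟨K * 16 ^ α + CB, by positivity, ?_⟩
  intro x y hx hy hr hrR
  set i0 : Fin d := (⟨0, by omega⟩ : Fin d) with hi0def
  set r : ℝ := dist x y with hrdef
  have hA0' : (0 : ℝ) ≤ min (x i0) r := le_min hx.le hr.le
  have hB0' : (0 : ℝ) ≤ min (y i0) r := le_min hy.le hr.le
  have hA0 : 0 ≤ min (x i0) r ^ α := Real.rpow_nonneg hA0' α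
  have hB0 : 0 ≤ min (y i0) r ^ α := Real.rpow_nonneg hB0' α
  have hre0 : 0 ≤ r ^ (2 - (d : ℝ) - 2 * α) := Real.rpow_nonneg hr.le _
  by_cases hcase : 4 * y i0 < r / 4
  · -- boundary case: use the Hölder estimate in `y`
    have hR8 : r / 4 < R₂ / 8 := by linarith
    have hI := hint x y hx hy (r / 4) rfl hcase hR8
    set M : ℝ := K * ((3 / 2 : ℝ) ^ α * min (x i0) r ^ α) * (r / 2) ^ (2 - (d : ℝ) - α)
      with hMdef
    have hM0 : 0 ≤ M := by
      apply mul_nonneg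
      · apply mul_nonneg hK.le
        exact mul_nonneg (Real.rpow_nonneg (by norm_num) α) hA0
      · exact Real.rpow_nonneg (by linarith) _
    set S : Set (EuclideanSpace ℝ (Fin d)) :=
      {w : EuclideanSpace ℝ (Fin d) | 0 < w i0} ∩ ball y (2 * (r / 4)) with hSdef
    have hSm : MeasurableSet S := by
      apply MeasurableSet.inter
      · exact measurableSet_lt measurable_const (EuclideanSpace.proj i0).continuous.measurable
      · exact measurableSet_ball
    have hSfin : volume S < ⊤ :=
      lt_of_le_of_lt (measure_mono inter_subset_right) measure_ball_lt_top
    have hbound : ∀ z ∈ S, ‖(Vs z x) ^ 2‖ ≤ M ^ 2 := by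
      intro z hz
      obtain ⟨hz1, hz2⟩ := hz
      have hz1 : 0 < z i0 := hz1
      have hzy : dist z y < 2 * (r / 4) := mem_ball.mp hz2
      have htri1 : r ≤ dist x z + dist z y := dist_triangle x z y
      have hlb : r / 2 ≤ dist x z := by linarith
      have htri2 : dist x z ≤ r + dist z y := by
        calc dist x z ≤ dist x y + dist y z := dist_triangle x y z
        _ = r + dist z y := by rw [dist_comm y z]
      have hub : dist x z ≤ 3 / 2 * r := by linarith
      have hxz0 : 0 < dist x z := by linarith
      have hubR : dist x z < R₂ := by linarith
      have hVxz := hi x z hx hz1 hxz0 hubR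
      have hminle : min (x i0) (dist x z) ≤ 3 / 2 * min (x i0) r := by
        rcases le_total (x i0) r with h | h
        · refine le_trans (min_le_left _ _) ?_
          rw [min_eq_left h]; linarith
        · rw [min_eq_right h]
          exact le_trans (min_le_right _ _) (by linarith)
      have hmin : min (x i0) (dist x z) ^ α ≤ (3 / 2 : ℝ) ^ α * min (x i0) r ^ α := by
        calc min (x i0) (dist x z) ^ α ≤ (3 / 2 * min (x i0) r) ^ α :=
              Real.rpow_le_rpow (le_min hx.le hxz0.le) hminle hα0.le
          _ = (3 / 2 : ℝ) ^ α * min (x i0) r ^ α := Real.mul_rpow (by norm_num) hA0'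
      have hpow : dist x z ^ (2 - (d : ℝ) - α) ≤ (r / 2) ^ (2 - (d : ℝ) - α) :=
        Real.rpow_le_rpow_of_nonpos (by linarith) hlb (by linarith)
      have hVsM : Vs z x ≤ M := by
        have hne : x ≠ z := dist_pos.mp hxz0
        have heq : Vs z x = V x z := (hsym x z hx hz1 hne).symm
        rw [heq, hMdef]
        refine le_trans hVxz ?_
        apply mul_le_mul
        · exact mul_le_mul_of_nonneg_left hmin hK.le
        · exact hpow
        · exact Real.rpow_nonneg hxz0.le _
        · exact mul_nonneg hK.le (mul_nonneg (Real.rpow_nonneg (by norm_num) α) hA0)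
      rw [Real.norm_eq_abs, abs_of_nonneg (by positivity)]
      exact pow_le_pow_left₀ (hVspos z x) hVsM 2
    have hInt := norm_setIntegral_le_of_norm_le_const hSfin hbound
    have hI1 : (∫ z in S, (Vs z x) ^ 2) ≤ M ^ 2 * (volume S).toReal :=
      le_trans (le_abs_self _) (by rw [← Real.norm_eq_abs]; exact hInt)
    have h2R0 : (0 : ℝ) < 2 * (r / 4) := by linarith
    have hvol : (volume S).toReal ≤ (2 * (r / 4)) ^ ((d : ℝ)) * c := by
      have h1 : volume S ≤ volume (ball y (2 * (r / 4))) := measure_mono inter_subset_right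
      have h2 : (volume (ball y (2 * (r / 4)))).toReal = (2 * (r / 4)) ^ ((d : ℝ)) * c := by
        rw [Measure.addHaar_ball_of_pos volume y h2R0, ENNReal.toReal_mul,
          ENNReal.toReal_ofReal (pow_nonneg h2R0.le _), finrank_euclideanSpace_fin,
          Real.rpow_natCast]
      rw [← h2]
      exact ENNReal.toReal_mono measure_ball_lt_top.ne h1
    have hIn0 : 0 ≤ ∫ z in S, (Vs z x) ^ 2 :=
      setIntegral_nonneg hSm fun z _ => by positivity
    have hX0 : (0 : ℝ) ≤ (2 * (r / 4)) ^ ((d : ℝ)) * c :=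
      mul_nonneg (Real.rpow_nonneg h2R0.le _) hc0
    have hIhalf : (∫ z in S, (Vs z x) ^ 2) ^ ((1 : ℝ) / 2) ≤
        M * ((2 * (r / 4)) ^ ((d : ℝ) / 2) * c ^ ((1 : ℝ) / 2)) := by
      have h3 : (∫ z in S, (Vs z x) ^ 2) ≤ M ^ 2 * ((2 * (r / 4)) ^ ((d : ℝ)) * c) :=
        le_trans hI1 (mul_le_mul_of_nonneg_left hvol (sq_nonneg M))
      have h4 := Real.rpow_le_rpow hIn0 h3 (by norm_num : (0 : ℝ) ≤ 1 / 2)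
      refine h4.trans_eq ?_
      rw [Real.mul_rpow (sq_nonneg M) hX0,
        Real.mul_rpow (Real.rpow_nonneg h2R0.le _) hc0]
      congr 1
      · rw [← Real.rpow_natCast M 2, ← Real.rpow_mul hM0]
        norm_num
      · congr 1
        rw [← Real.rpow_mul h2R0.le]
        congr 1
        ring
    have hpre0 : 0 ≤ K' * y i0 ^ α * (r / 4) ^ e :=
      mul_nonneg (mul_nonneg hK'.le (Real.rpow_nonneg hy.le α))
        (Real.rpow_nonneg (by linarith) e)
    have hstep : V x y ≤ K' * y i0 ^ α * (r / 4) ^ e *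
        (M * ((2 * (r / 4)) ^ ((d : ℝ) / 2) * c ^ ((1 : ℝ) / 2))) :=
      le_trans hI (mul_le_mul_of_nonneg_left hIhalf hpre0)
    have hBy : min (y i0) r = y i0 := min_eq_left (by linarith)
    have h2Rr : 2 * (r / 4) = r / 2 := by ring
    have hr4 : (r / 4) ^ e = r ^ e * ((4 : ℝ) ^ e)⁻¹ := by
      rw [Real.div_rpow hr.le (by norm_num), div_eq_mul_inv]
    have hr2a : (r / 2) ^ (2 - (d : ℝ) - α) =
        r ^ (2 - (d : ℝ) - α) * ((2 : ℝ) ^ (2 - (d : ℝ) - α))⁻¹ := by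
      rw [Real.div_rpow hr.le (by norm_num), div_eq_mul_inv]
    have hr2b : (r / 2) ^ ((d : ℝ) / 2) =
        r ^ ((d : ℝ) / 2) * ((2 : ℝ) ^ ((d : ℝ) / 2))⁻¹ := by
      rw [Real.div_rpow hr.le (by norm_num), div_eq_mul_inv]
    have hrprod : r ^ e * (r ^ (2 - (d : ℝ) - α) * r ^ ((d : ℝ) / 2)) =
        r ^ (2 - (d : ℝ) - 2 * α) := by
      rw [← Real.rpow_add hr, ← Real.rpow_add hr]
      congr 1
      rw [hedef]; ring
    have hfinal : K' * y i0 ^ α * (r / 4) ^ e *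
        (M * ((2 * (r / 4)) ^ ((d : ℝ) / 2) * c ^ ((1 : ℝ) / 2))) =
        CB * min (x i0) r ^ α * min (y i0) r ^ α * r ^ (2 - (d : ℝ) - 2 * α) := by
      rw [hBy, h2Rr, hMdef, hr4, hr2a, hr2b, hCBdef, ← hrprod]
      ring
    calc V x y ≤ K' * y i0 ^ α * (r / 4) ^ e *
        (M * ((2 * (r / 4)) ^ ((d : ℝ) / 2) * c ^ ((1 : ℝ) / 2))) := hstep
      _ = CB * min (x i0) r ^ α * min (y i0) r ^ α * r ^ (2 - (d : ℝ) - 2 * α) := hfinal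
      _ ≤ (K * 16 ^ α + CB) * min (x i0) r ^ α * min (y i0) r ^ α *
          r ^ (2 - (d : ℝ) - 2 * α) := by
        have hle : CB ≤ K * 16 ^ α + CB := le_add_of_nonneg_left (by positivity)
        exact mul_le_mul_of_nonneg_right
          (mul_le_mul_of_nonneg_right (mul_le_mul_of_nonneg_right hle hA0) hB0) hre0
  · -- interior case: `d_y` is comparable to `r`
    have hy16 : r / 16 ≤ y i0 := by
      have := not_lt.mp hcase
      linarith
    have hminy : r / 16 ≤ min (y i0) r := le_min hy16 (by linarith)
    have hBle : (r / 16) ^ α ≤ min (y i0) r ^ α :=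
      Real.rpow_le_rpow (by linarith) hminy hα0.le
    have h1 : V x y ≤ K * min (x i0) r ^ α * r ^ (2 - (d : ℝ) - α) :=
      hi x y hx hy hr (by linarith)
    have hsplit : r ^ (2 - (d : ℝ) - α) = r ^ (2 - (d : ℝ) - 2 * α) * r ^ α := by
      rw [← Real.rpow_add hr]
      congr 1
      ring
    have hralpha : r ^ α = 16 ^ α * (r / 16) ^ α := by
      rw [Real.div_rpow hr.le (by norm_num : (0 : ℝ) ≤ 16)]
      have h16 : (0 : ℝ) < (16 : ℝ) ^ α := Real.rpow_pos_of_pos (by norm_num) α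
      field_simp
    calc V x y ≤ K * min (x i0) r ^ α * r ^ (2 - (d : ℝ) - α) := h1
      _ = K * 16 ^ α * min (x i0) r ^ α * (r / 16) ^ α * r ^ (2 - (d : ℝ) - 2 * α) := by
        rw [hsplit, hralpha]; ring
      _ ≤ K * 16 ^ α * min (x i0) r ^ α * min (y i0) r ^ α * r ^ (2 - (d : ℝ) - 2 * α) := by
        refine mul_le_mul_of_nonneg_right (mul_le_mul_of_nonneg_left hBle ?_) hre0
        positivity
      _ ≤ (K * 16 ^ α + CB) * min (x i0) r ^ α * min (y i0) r ^ α *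
          r ^ (2 - (d : ℝ) - 2 * α) := by
        have hle : K * 16 ^ α ≤ K * 16 ^ α + CB := le_add_of_nonneg_right hCB0
        exact mul_le_mul_of_nonneg_right
          (mul_le_mul_of_nonneg_right (mul_le_mul_of_nonneg_right hle hA0) hB0) hre0
end

section
/- Let $d \ge 3$ and suppose $V, {}^*V : \mathbb{R}^d \times \mathbb{R}^d \to \mathbb{R}^{d\times d}$ and families $(V_\varepsilon)_{\varepsilon>0}$, $({}^*V_\delta)_{\delta>0}$ of continuous matrix-valued functions satisfy: (i) the exchange identity $\fint_{B_\varepsilon(y)} {}^*V^{k\ell}_\delta(z, x)\,dz = \fint_{B_\delta(x)} V^{\ell k}_\varepsilon(z, y)\,dz$ for all $\varepsilon, \delta > 0$, $x \ne y$, and all $k, \ell$; (ii) for every compact $K \subset \mathbb{R}^d \setminus \{y\}$ there are sequences $\varepsilon_\rho \to 0$, $\delta_\tau \to 0$ with $V_{\varepsilon_\rho}(\cdot, y) \to V(\cdot, y)$ and ${}^*V_{\delta_\tau}(\cdot, x) \to {}^*V(\cdot, x)$ uniformly on compacts avoiding the poles, and the limits $V(\cdot,y)$, ${}^*V(\cdot,x)$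 are continuous away from their poles. Then for all $x \ne y$ and all $k, \ell$: $V^{\ell k}(x, y) = {}^*V^{k\ell}(y, x)$, i.e., $V(x,y) = {}^*V(y,x)^{\mathrm{tr}}$. -/
open MeasureTheory Metric Set Filter Topology

variable {d : ℕ}

local notation "E" => EuclideanSpace ℝ (Fin d)

lemma avg_abs_le {y : E} {r : ℝ} (hr : 0 < r) (g : E → ℝ)
    {C : ℝ} (hC : ∀ z ∈ ball y r, |g z| ≤ C) :
    |⨍ z in ball y r, g z| ≤ C := by
  have hpos : 0 < volume (ball y r) := measure_ball_pos _ _ hr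
  have hfin : volume (ball y r) < ⊤ := measure_ball_lt_top
  have hm : (volume (ball y r)).toReal ≠ 0 := by
    exact (ENNReal.toReal_pos hpos.ne' hfin.ne).ne'
  rw [setAverage_eq, smul_eq_mul, abs_mul, abs_of_nonneg (by positivity)]
  have hI : ‖∫ z in ball y r, g z‖ ≤ C * (volume (ball y r)).toReal :=
    norm_setIntegral_le_of_norm_le_const hfin
      (by simpa [Real.norm_eq_abs] using hC)
  calc (volume (ball y r)).toReal⁻¹ * |∫ z in ball y r, g z|
      ≤ (volume (ball y r)).toReal⁻¹ * (C * (volume (ball y r)).toReal) := by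
        apply mul_le_mul_of_nonneg_left _ (by positivity)
        simpa [Real.norm_eq_abs] using hI
    _ = C := by field_simp

lemma avg_sub_avg {s : Set E} {F f : E → ℝ} (hF : IntegrableOn F s) (hf : IntegrableOn f s) :
    ⨍ z in s, (F z - f z) = (⨍ z in s, F z) - ⨍ z in s, f z := by
  simp only [setAverage_eq, integral_sub hF hf, smul_sub]

lemma tendsto_avg_ball {f : E → ℝ} {U : Set E} (hU : IsOpen U) {y : E} (hy : y ∈ U)
    (hf : ContinuousOn f U) {r : ℕ → ℝ} (hrpos : ∀ n, 0 < r n)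
    (hr0 : Tendsto r atTop (𝓝 0)) :
    Tendsto (fun n => ⨍ z in ball y (r n), f z) atTop (𝓝 (f y)) := by
  rw [Metric.tendsto_nhds]
  intro η hη
  obtain ⟨δ₁, hδ₁, hδ₁U⟩ := Metric.isOpen_iff.1 hU y hy
  have hcy : ContinuousAt f y := hf.continuousAt (hU.mem_nhds hy)
  obtain ⟨δ₂, hδ₂, hδ₂f⟩ := Metric.continuousAt_iff.1 hcy (η / 2) (by positivity)
  have hev : ∀ᶠ n in atTop, r n < min δ₁ δ₂ := by
    have := (Metric.tendsto_nhds.1 hr0) (min δ₁ δ₂) (lt_min hδ₁ hδ₂)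
    filter_upwards [this] with n hn
    calc r n ≤ |r n| := le_abs_self _
      _ < min δ₁ δ₂ := by simpa [Real.dist_eq] using hn
  filter_upwards [hev] with n hn
  have hint : IntegrableOn f (ball y (r n)) := by
    have hcb : closedBall y (r n) ⊆ U := fun z hz => by
      apply hδ₁U
      exact mem_ball.2 ((mem_closedBall.1 hz).trans_lt (hn.trans_le (min_le_left _ _)))
    exact ((hf.mono hcb).integrableOn_compact (isCompact_closedBall _ _)).mono_set
      ball_subset_closedBall
  have hintc : IntegrableOn (fun _ : E => f y) (ball y (r n)) :=
    integrableOn_const measure_ball_lt_top.ne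
  have key : |⨍ z in ball y (r n), (f z - f y)| ≤ η / 2 := by
    apply avg_abs_le (hrpos n)
    intro z hz
    have : dist z y < δ₂ := hz.trans_le ((le_of_lt hn).trans (min_le_right _ _))
    exact (le_of_lt (by simpa [Real.dist_eq] using hδ₂f this))
  have havg : ⨍ z in ball y (r n), (f z - f y)
      = (⨍ z in ball y (r n), f z) - f y := by
    rw [avg_sub_avg hint hintc]
    congr 1
    rw [setAverage_eq, setIntegral_const, smul_smul, inv_mul_cancel₀, one_smul]
    exact (ENNReal.toReal_pos (measure_ball_pos _ _ (hrpos n)).ne' measure_ball_lt_top.ne).ne'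
  rw [Real.dist_eq]
  calc |(⨍ z in ball y (r n), f z) - f y| = |⨍ z in ball y (r n), (f z - f y)| := by rw [havg]
    _ ≤ η / 2 := key
    _ < η := by linarith

lemma tendsto_avg_of_unif {y : E} {r : ℝ} (hr : 0 < r) {F : ℕ → E → ℝ} {f : E → ℝ}
    (hunif : TendstoUniformlyOn F f atTop (ball y r))
    (hFi : ∀ n, IntegrableOn (F n) (ball y r)) (hfi : IntegrableOn f (ball y r)) :
    Tendsto (fun n => ⨍ z in ball y r, F n z) atTop (𝓝 (⨍ z in ball y r, f z)) := by
  rw [Metric.tendsto_nhds]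
  intro η hη
  have := (Metric.tendstoUniformlyOn_iff.1 hunif) (η / 2) (by positivity)
  filter_upwards [this] with n hn
  rw [Real.dist_eq]
  have : (⨍ z in ball y r, F n z) - (⨍ z in ball y r, f z)
      = ⨍ z in ball y r, (F n z - f z) := (avg_sub_avg (hFi n) hfi).symm
  rw [this]
  calc |⨍ z in ball y r, (F n z - f z)| ≤ η / 2 := by
        apply avg_abs_le hr
        intro z hz
        have := hn z hz
        rw [Real.dist_eq, abs_sub_comm] at this
        exact this.le
    _ < η := by linarith


/-- symmetry/duality relation `V(x,y) = {}^*V(y,x)^{tr}` (Corollary 2.7)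
from the exchange identity for the averaged fundamental solutions and uniform convergence
on compact sets away from the poles. -/
theorem stmt_14 (d : ℕ) (hd : 3 ≤ d)
    (V Vs : EuclideanSpace ℝ (Fin d) → EuclideanSpace ℝ (Fin d) → Matrix (Fin d) (Fin d) ℝ)
    (Vε Vsδ : ℝ → EuclideanSpace ℝ (Fin d) → EuclideanSpace ℝ (Fin d) →
      Matrix (Fin d) (Fin d) ℝ)
    -- the averaged solutions are continuous
    (hVεcont : ∀ ε : ℝ, 0 < ε → ∀ y, Continuous fun z => Vε ε z y)
    (hVsδcont : ∀ δ : ℝ, 0 < δ → ∀ x, Continuous fun z => Vsδ δ z x)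
    -- (i) exchange identity
    (hexch : ∀ ε δ : ℝ, 0 < ε → 0 < δ →
      ∀ x y : EuclideanSpace ℝ (Fin d), x ≠ y → ∀ k l : Fin d,
      (⨍ z in ball y ε, Vsδ δ z x k l) = ⨍ z in ball x δ, Vε ε z y l k)
    -- (ii) uniform convergence on compacts avoiding the poles, and continuity of the limits
    (hVconv : ∀ y : EuclideanSpace ℝ (Fin d), ∀ K : Set (EuclideanSpace ℝ (Fin d)),
      IsCompact K → K ⊆ {y}ᶜ →
      ∃ ε' : ℕ → ℝ, (∀ n, 0 < ε' n) ∧ Tendsto ε' atTop (nhds 0) ∧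
        TendstoUniformlyOn (fun n z => Vε (ε' n) z y) (fun z => V z y) atTop K)
    (hVsconv : ∀ x : EuclideanSpace ℝ (Fin d), ∀ K : Set (EuclideanSpace ℝ (Fin d)),
      IsCompact K → K ⊆ {x}ᶜ →
      ∃ δ' : ℕ → ℝ, (∀ n, 0 < δ' n) ∧ Tendsto δ' atTop (nhds 0) ∧
        TendstoUniformlyOn (fun n z => Vsδ (δ' n) z x) (fun z => Vs z x) atTop K)
    (hVcont : ∀ y, ContinuousOn (fun z => V z y) {y}ᶜ)
    (hVscont : ∀ x, ContinuousOn (fun z => Vs z x) {x}ᶜ) :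
    ∀ x y : EuclideanSpace ℝ (Fin d), x ≠ y → ∀ k l : Fin d,
      V x y l k = Vs y x k l := by
  intro x y hxy k l
  have hR : (0 : ℝ) < dist x y := dist_pos.2 hxy
  set R := dist x y with hRdef
  -- evaluation at entry (k,l) and (l,k) is uniformly continuous
  have huckl : UniformContinuous (fun M : Matrix (Fin d) (Fin d) ℝ => M k l) :=
    (Pi.uniformContinuous_proj _ l).comp (Pi.uniformContinuous_proj _ k)
  -- compact set around y avoiding x
  have hKs : closedBall y (R / 2) ⊆ ({x}ᶜ : Set (EuclideanSpace ℝ (Fin d))) := by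
    intro z hz
    simp only [mem_compl_iff, mem_singleton_iff]
    rintro rfl
    have : R ≤ R / 2 := mem_closedBall.1 hz
    linarith
  obtain ⟨δ', hδpos, hδ0, hδunif⟩ :=
    hVsconv x (closedBall y (R / 2)) (isCompact_closedBall _ _) hKs
  have hδunif' : TendstoUniformlyOn (fun m z => Vsδ (δ' m) z x k l)
      (fun z => Vs z x k l) atTop (closedBall y (R / 2)) :=
    huckl.comp_tendstoUniformlyOn hδunif
  have hgcont : Continuous (fun M : Matrix (Fin d) (Fin d) ℝ => M k l) :=
    (continuous_apply l).comp (continuous_apply k)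
  have hVskl : ContinuousOn (fun z => Vs z x k l) ({x}ᶜ : Set (EuclideanSpace ℝ (Fin d))) :=
    hgcont.comp_continuousOn (hVscont x)
  -- Step A: for each small ε, the ε-average of Vs equals Vε at the center
  have claim : ∀ ε : ℝ, 0 < ε → ε ≤ R / 2 →
      (⨍ z in ball y ε, Vs z x k l) = Vε ε x y l k := by
    intro ε hε hεR
    have hball : ball y ε ⊆ closedBall y (R / 2) := fun z hz =>
      mem_closedBall.2 ((le_of_lt hz).trans hεR)
    have hFi : ∀ m, IntegrableOn (fun z => Vsδ (δ' m) z x k l) (ball y ε) := fun m =>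
      ((((hVsδcont _ (hδpos m) x).matrix_elem k l).continuousOn).integrableOn_compact
        (isCompact_closedBall y ε)).mono_set ball_subset_closedBall
    have hfi : IntegrableOn (fun z => Vs z x k l) (ball y ε) := by
      have hcb : closedBall y ε ⊆ ({x}ᶜ : Set (EuclideanSpace ℝ (Fin d))) := fun z hz =>
        hKs (mem_closedBall.2 ((mem_closedBall.1 hz).trans hεR))
      exact ((hVskl.mono hcb).integrableOn_compact (isCompact_closedBall _ _)).mono_set
        ball_subset_closedBall
    have h1 : Tendsto (fun m => ⨍ z in ball y ε, Vsδ (δ' m) z x k l) atTop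
        (𝓝 (⨍ z in ball y ε, Vs z x k l)) :=
      tendsto_avg_of_unif hε (hδunif'.mono hball) hFi hfi
    have h3 : Tendsto (fun m => ⨍ z in ball x (δ' m), Vε ε z y l k) atTop
        (𝓝 (Vε ε x y l k)) :=
      tendsto_avg_ball isOpen_univ (mem_univ x)
        ((hVεcont ε hε y).matrix_elem l k).continuousOn hδpos hδ0
    have h2 : Tendsto (fun m => ⨍ z in ball y ε, Vsδ (δ' m) z x k l) atTop
        (𝓝 (Vε ε x y l k)) :=
      h3.congr fun m => (hexch ε (δ' m) hε (hδpos m) x y hxy k l).symm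
    exact tendsto_nhds_unique h1 h2
  -- Step B
  obtain ⟨ε', hεpos, hε0, hεunif⟩ := hVconv y {x} isCompact_singleton
    (singleton_subset_iff.2 (by simpa using hxy))
  have hpt : Tendsto (fun n => Vε (ε' n) x y) atTop (𝓝 (V x y)) :=
    hεunif.tendsto_at rfl
  have hg2 : Continuous (fun M : Matrix (Fin d) (Fin d) ℝ => M l k) :=
    (continuous_apply k).comp (continuous_apply l)
  have hptkl : Tendsto (fun n => Vε (ε' n) x y l k) atTop (𝓝 (V x y l k)) :=
    (hg2.tendsto _).comp hpt
  have hA : Tendsto (fun n => ⨍ z in ball y (ε' n), Vs z x k l) atTop (𝓝 (Vs y x k l)) :=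
    tendsto_avg_ball isOpen_compl_singleton (by simpa using hxy.symm) hVskl hεpos hε0
  have hev : ∀ᶠ n in atTop, ε' n ≤ R / 2 := by
    have := (Metric.tendsto_nhds.1 hε0) (R / 2) (by positivity)
    filter_upwards [this] with n hn
    calc ε' n ≤ |ε' n| := le_abs_self _
      _ ≤ R / 2 := by rw [Real.dist_eq] at hn; simpa using hn.le
  have hB : Tendsto (fun n => Vε (ε' n) x y l k) atTop (𝓝 (Vs y x k l)) := by
    apply hA.congr'
    filter_upwards [hev] with n hn
    exact claim (ε' n) (hεpos n) hn
  exact tendsto_nhds_unique hptkl hB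
end
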